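/- For every integer n ≥ 1, the function Φ̃ : (0, ∞) → ℝ defined by Φ̃(ρ) = e^{ρ} ∑_{k=0}^{n−1} E_{k+1}(ρ), where E_τ(ρ) = ∫₁^∞ e^{−ρt} t^{−τ} dt, is strictly decreasing on (0, ∞). (Monotonicity of Φ underlying Remark 2) -/

import Mathlib

open MeasureTheory Real Set

lemma integ_aux (ρ : ℝ) (hρ : 0 < ρ) (τ : ℕ) :
    IntegrableOn (fun t : ℝ => Real.exp (ρ - ρ * t) / t ^ τ) (Set.Ioi 1) := by
  have base : IntegrableOn (fun t : ℝ => Real.exp ρ * Real.exp (-ρ * t)) (Set.Ioi 1) :=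
    (exp_neg_integrableOn_Ioi 1 hρ).const_mul _
  apply base.mono'
  · apply ContinuousOn.aestronglyMeasurable _ measurableSet_Ioi
    apply ContinuousOn.div (by fun_prop) (by fun_prop)
    intro t ht
    exact pow_ne_zero _ (by simp at ht; linarith)
  · filter_upwards [ae_restrict_mem measurableSet_Ioi] with t ht
    simp only [Set.mem_Ioi] at ht
    have h1 : (0:ℝ) < t ^ τ := pow_pos (by linarith) _
    have h2 : (1:ℝ) ≤ t ^ τ := one_le_pow₀ (by linarith)
    rw [Real.norm_eq_abs, abs_of_nonneg (by positivity)]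
    calc Real.exp (ρ - ρ * t) / t ^ τ ≤ Real.exp (ρ - ρ * t) :=
          div_le_self (Real.exp_pos _).le h2
      _ = Real.exp ρ * Real.exp (-ρ * t) := by rw [← Real.exp_add]; ring_nf

lemma main_lt (τ : ℕ) {a b : ℝ} (ha : 0 < a) (hab : a < b) :
    (∫ t in Set.Ioi (1:ℝ), Real.exp (b - b * t) / t ^ τ) <
    (∫ t in Set.Ioi (1:ℝ), Real.exp (a - a * t) / t ^ τ) := by
  have hb : 0 < b := lt_trans ha hab
  rw [← sub_pos, ← integral_sub (integ_aux a ha τ) (integ_aux b hb τ)]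
  set g : ℝ → ℝ := fun t => Real.exp (a - a * t) / t ^ τ - Real.exp (b - b * t) / t ^ τ with hg
  have hpos : ∀ t ∈ Set.Ioi (1:ℝ), 0 < g t := by
    intro t ht
    simp only [Set.mem_Ioi] at ht
    have htp : (0:ℝ) < t ^ τ := pow_pos (by linarith) _
    have : Real.exp (b - b * t) < Real.exp (a - a * t) := by
      apply Real.exp_lt_exp.mpr; nlinarith
    have : Real.exp (b - b * t) / t ^ τ < Real.exp (a - a * t) / t ^ τ := by gcongr
    simpa [g] using sub_pos.mpr this
  apply (setIntegral_pos_iff_support_of_nonneg_ae ?_ ?_).mpr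
  · refine lt_of_lt_of_le ?_ (measure_mono (fun t ht => ⟨(hpos t ht).ne', ht⟩ :
      Set.Ioi (1:ℝ) ⊆ Function.support g ∩ Set.Ioi 1))
    simp [Real.volume_Ioi]
  · filter_upwards [ae_restrict_mem measurableSet_Ioi] with t ht
    exact (hpos t ht).le
  · exact (integ_aux a ha τ).sub (integ_aux b hb τ)

theorem stmt_7
    (n : ℕ) (hn : 1 ≤ n)
    (E : ℕ → ℝ → ℝ)
    (hE : ∀ τ : ℕ, ∀ z : ℝ, E τ z = ∫ t in Set.Ioi (1 : ℝ), Real.exp (-z * t) / t ^ τ) :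
    StrictAntiOn (fun ρ => Real.exp ρ * ∑ k ∈ Finset.range n, E (k + 1) ρ)
      (Set.Ioi (0 : ℝ)) := by
  have key : ∀ ρ : ℝ, ∀ τ : ℕ,
      Real.exp ρ * (∫ t in Set.Ioi (1:ℝ), Real.exp (-ρ * t) / t ^ τ)
        = ∫ t in Set.Ioi (1:ℝ), Real.exp (ρ - ρ * t) / t ^ τ := by
    intro ρ τ
    rw [← integral_const_mul]
    congr 1; funext t
    rw [mul_div_assoc', ← Real.exp_add]; ring_nf
  intro a ha b hb hab
  simp only [Set.mem_Ioi] at ha hb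
  simp only [hE, Finset.mul_sum, key]
  apply Finset.sum_lt_sum_of_nonempty (by simp; omega)
  intro k _
  exact main_lt (k+1) ha hab
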